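/- Let T be a tree of order at least 3. If the maximum degree Δ(T) is odd and T is not (3^p−2)-regular for any integer p ≥ 2, then χ'_g(T) ≤ Δ(T)+2; otherwise χ'_g(T) ≤ Δ(T)+3. -/

import Mathlib

open Finset SimpleGraph

set_option linter.unusedSectionVars false
set_option maxHeartbeats 1600000
set_option linter.unreachableTactic false
set_option linter.unusedTactic false
set_option linter.unnecessarySeqFocus false

open Finset

section Grp
variable {A : Type} [AddCommGroup A] [Fintype A] [DecidableEq A]

lemma odd_self_eq_zero (hodd : Odd (Fintype.card A)) {x : A} (hx : x + x = 0) : x = 0 := by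
  have h2 : addOrderOf x ∣ 2 := addOrderOf_dvd_of_nsmul_eq_zero (by simpa [two_nsmul] using hx)
  have hc : addOrderOf x ∣ Fintype.card A := addOrderOf_dvd_card
  have hd : addOrderOf x ∣ Nat.gcd 2 (Fintype.card A) := Nat.dvd_gcd h2 hc
  have hg : Nat.gcd 2 (Fintype.card A) = 1 := by
    rw [Nat.gcd_rec, Nat.odd_iff.mp hodd]; rfl
  rw [hg, Nat.dvd_one] at hd
  exact AddMonoid.addOrderOf_eq_one_iff.mp hd

lemma odd_neg_ne (hodd : Odd (Fintype.card A)) {x : A} (hx : x ≠ 0) : -x ≠ x := by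
  intro h
  apply hx
  apply odd_self_eq_zero hodd
  nth_rewrite 1 [← h]
  exact neg_add_cancel x

lemma odd_doubling_inj (hodd : Odd (Fintype.card A)) {x y : A} (h : x + x = y + y) : x = y := by
  have h1 : (x - y) + (x - y) = 0 := by
    have : (x + x) - (y + y) = 0 := sub_eq_zero.mpr h
    calc (x - y) + (x - y) = (x + x) - (y + y) := by abel
    _ = 0 := this
  exact sub_eq_zero.mp (odd_self_eq_zero hodd h1)

/-- In an odd abelian group, a set closed under negation has zero sum. -/
lemma odd_sum_sym_eq_zero (hodd : Odd (Fintype.card A)) {S : Finset A}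
    (hs : ∀ x ∈ S, -x ∈ S) : ∑ x ∈ S, x = 0 := by
  have key : ∑ x ∈ S, x = ∑ x ∈ S, -x := by
    apply Finset.sum_nbij' (fun x => -x) (fun x => -x) <;> simp_all
  have : (∑ x ∈ S, x) + (∑ x ∈ S, x) = 0 := by
    nth_rewrite 2 [key]; rw [← Finset.sum_add_distrib]; simp
  exact odd_self_eq_zero hodd this

/-- Existence of symmetric (negation-closed) sets of given even size avoiding
a symmetric forbidden set. -/
lemma exists_sym_avoiding (hodd : Odd (Fintype.card A)) :
    ∀ (m : ℕ) (F : Finset A), (0:A) ∈ F → (∀ x ∈ F, -x ∈ F) →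
    2*m + F.card ≤ Fintype.card A + 1 →
    ∃ S : Finset A, S.card = 2*m ∧ (∀ x ∈ S, -x ∈ S) ∧ Disjoint S F := by
  intro m
  induction m with
  | zero => exact fun F _ _ _ => ⟨∅, by simp⟩
  | succ m ih =>
    intro F h0 hFsym hcard
    obtain ⟨S, hScard, hSsym, hSF⟩ := ih F h0 hFsym (by omega)
    have hlt : (S ∪ F).card < Fintype.card A := by
      calc (S ∪ F).card ≤ S.card + F.card := Finset.card_union_le _ _
      _ < Fintype.card A := by omega
    obtain ⟨x, hx⟩ : ∃ x : A, x ∉ S ∪ F := by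
      by_contra hco
      push_neg at hco
      have : (Finset.univ : Finset A) ⊆ S ∪ F := fun y _ => hco y
      have := Finset.card_le_card this
      simp [Finset.card_univ] at this
      omega
    simp only [Finset.mem_union, not_or] at hx
    have hxS : x ∉ S := hx.1
    have hxF : x ∉ F := hx.2
    have hx0 : x ≠ 0 := fun h => hxF (h ▸ h0)
    have hnx : -x ≠ x := odd_neg_ne hodd hx0
    have hnxS : -x ∉ S := fun h => hxS (by simpa using hSsym _ h)
    have hnxF : -x ∉ F := fun h => hxF (by simpa using hFsym _ h)
    refine ⟨insert x (insert (-x) S), ?_, ?_, ?_⟩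
    · rw [Finset.card_insert_of_notMem (by simp [hxS, hnx.symm]),
        Finset.card_insert_of_notMem hnxS, hScard]; ring
    · intro y hy
      simp only [Finset.mem_insert] at hy ⊢
      rcases hy with rfl|rfl|hy
      · tauto
      · simp
      · exact Or.inr (Or.inr (hSsym _ hy))
    · simp only [Finset.disjoint_left, Finset.mem_insert]
      rintro y (rfl|rfl|hy)
      · exact hxF
      · exact hnxF
      · exact fun h => (Finset.disjoint_left.mp hSF) hy h
end Grp

section Grp2
variable {A : Type} [AddCommGroup A] [Fintype A] [DecidableEq A]

lemma exists_outside (D : Finset A) (h : D.card < Fintype.card A) : ∃ x : A, x ∉ D := by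
  by_contra h'
  push_neg at h'
  have hs : (Finset.univ : Finset A) ⊆ D := fun y _ => h' y
  have := Finset.card_le_card hs
  rw [Finset.card_univ] at this
  omega

lemma exists_two_outside (D : Finset A) (h : D.card + 2 ≤ Fintype.card A) :
    ∃ x y : A, x ≠ y ∧ x ∉ D ∧ y ∉ D := by
  have h1 : 1 < (Finset.univ \ D).card := by
    rw [Finset.card_sdiff_of_subset (Finset.subset_univ D), Finset.card_univ]; omega
  obtain ⟨x, hx, y, hy, hxy⟩ := Finset.one_lt_card.mp h1
  exact ⟨x, y, hxy, (Finset.mem_sdiff.mp hx).2, (Finset.mem_sdiff.mp hy).2⟩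

lemma exists_avoid_double (hodd : Odd (Fintype.card A)) (D : Finset A) (c : A)
    (h : D.card + 2 ≤ Fintype.card A) : ∃ x : A, x ∉ D ∧ x + x ≠ c := by
  obtain ⟨x, y, hxy, hx, hy⟩ := exists_two_outside D h
  by_cases hcx : x + x = c
  · refine ⟨y, hy, fun hcy => hxy (odd_doubling_inj hodd (hcx.trans hcy.symm))⟩
  · exact ⟨x, hx, hcx⟩

lemma odd_sum_univ (hodd : Odd (Fintype.card A)) : ∑ x : A, x = 0 :=
  odd_sum_sym_eq_zero hodd (by simp)

lemma exists_zero_sum_subset (hodd : Odd (Fintype.card A)) {a : A} (ha : a ≠ 0) {t : ℕ}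
    (ht2 : 2 ≤ t) (ht : t + 3 ≤ Fintype.card A) :
    ∃ S : Finset A, S.card = t ∧ (0:A) ∉ S ∧ a ∉ S ∧ ∑ x ∈ S, x = 0 := by
  set k := Fintype.card A with hk
  rcases Nat.even_or_odd t with hev | hodd_t
  · -- t even : use a symmetric set
    obtain ⟨m, hm⟩ := hev
    have hF0 : (0:A) ∈ ({0, a, -a} : Finset A) := by simp
    have hFsym : ∀ x ∈ ({0, a, -a} : Finset A), -x ∈ ({0, a, -a} : Finset A) := by
      intro x hx; simp only [Finset.mem_insert, Finset.mem_singleton] at hx ⊢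
      rcases hx with rfl|rfl|rfl <;> simp
    have hFcard : ({0, a, -a} : Finset A).card ≤ 3 := by
      apply le_trans (Finset.card_insert_le _ _)
      have := Finset.card_insert_le (a) ({-a} : Finset A)
      simp at this ⊢; omega
    obtain ⟨S, hScard, hSsym, hSdisj⟩ := exists_sym_avoiding hodd m {0, a, -a} hF0 hFsym (by omega)
    refine ⟨S, by omega, ?_, ?_, odd_sum_sym_eq_zero hodd hSsym⟩
    · exact fun h => (Finset.disjoint_left.mp hSdisj) h (by simp)
    · exact fun h => (Finset.disjoint_left.mp hSdisj) h (by simp)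
  · -- t odd
    have hkodd := Nat.odd_iff.mp hodd
    have htodd := Nat.odd_iff.mp hodd_t
    have ht4 : t + 4 ≤ k := by omega
    have ht3 : 3 ≤ t := by omega
    by_cases hbig : t + 4 = k
    · -- t = k - 4 : complement of four elements
      have hk7 : 7 ≤ k := by omega
      have hDcard : ({(0:A), a, -a, -(a+a)} : Finset A).card ≤ 4 := by
        apply le_trans (Finset.card_insert_le _ _)
        have h1 : ({a, -a, -(a+a)} : Finset A).card ≤ 3 := by
          apply le_trans (Finset.card_insert_le _ _)
          have := Finset.card_insert_le (-a) ({-(a+a)} : Finset A)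
          simp at this ⊢; omega
        omega
      obtain ⟨x, hxD, hxx⟩ := exists_avoid_double hodd {0, a, -a, -(a+a)} (-a) (by omega)
      simp only [Finset.mem_insert, Finset.mem_singleton, not_or] at hxD
      obtain ⟨hx0, hxa, hxna, hxnaa⟩ := hxD
      set y := -a - x with hy
      have hyne0 : y ≠ 0 := by
        simp only [hy]; intro h; apply hxna
        exact sub_eq_zero.mp ((by abel : x - (-a) = (0:A) - (-a - x)).trans (sub_eq_zero_of_eq h.symm))
      have hynea : y ≠ a := by
        simp only [hy]; intro h; apply hxnaa
        exact sub_eq_zero.mp ((by abel : x - (-(a+a)) = a - (-a - x)).trans (sub_eq_zero_of_eq h.symm))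
      have hxney : x ≠ y := by
        simp only [hy]; intro h; apply hxx
        exact sub_eq_zero.mp ((by abel : (x + x) - (-a) = x - (-a - x)).trans (sub_eq_zero_of_eq h))
      have hane0 : a ≠ (0:A) := ha
      -- the four removed elements
      set e : Finset A := {0, a, x, y} with he
      have hecard : e.card = 4 := by
        rw [he]
        rw [Finset.card_insert_of_notMem (by simp [ha.symm, Ne.symm hx0, Ne.symm hyne0]),
          Finset.card_insert_of_notMem (by simp [Ne.symm hxa, Ne.symm hynea]),
          Finset.card_insert_of_notMem (by simp [hxney]), Finset.card_singleton]
      have hesum : ∑ v ∈ e, v = 0 := by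
        rw [he]
        rw [Finset.sum_insert (by simp [ha.symm, Ne.symm hx0, Ne.symm hyne0]),
          Finset.sum_insert (by simp [Ne.symm hxa, Ne.symm hynea]),
          Finset.sum_insert (by simp [hxney]), Finset.sum_singleton]
        simp only [hy]; abel
      refine ⟨Finset.univ \ e, ?_, by simp [he], by simp [he], ?_⟩
      · rw [Finset.card_sdiff_of_subset (Finset.subset_univ _), Finset.card_univ, hecard]; omega
      · rw [Finset.sum_sdiff_eq_sub (Finset.subset_univ _), odd_sum_univ hodd, hesum]; simp
    · -- t ≤ k - 6 : triple plus symmetric set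
      have ht6 : t + 6 ≤ k := by omega
      have hk9 : 9 ≤ k := by omega
      -- choose x ∉ {0, a}
      obtain ⟨x, hxD⟩ := exists_outside ({0, a} : Finset A)
        (lt_of_le_of_lt (by apply le_trans (Finset.card_insert_le _ _); simp) (by omega : 2 < k))
      simp only [Finset.mem_insert, Finset.mem_singleton, not_or] at hxD
      obtain ⟨hx0, hxa⟩ := hxD
      -- choose y
      have hD2 : ({(0:A), a, x, -x, -x-a, -(x+x)} : Finset A).card ≤ 6 := by
        apply le_trans (Finset.card_insert_le _ _)
        have : ({a, x, -x, -x-a, -(x+x)} : Finset A).card ≤ 5 := by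
          apply le_trans (Finset.card_insert_le _ _)
          have : ({x, -x, -x-a, -(x+x)} : Finset A).card ≤ 4 := by
            apply le_trans (Finset.card_insert_le _ _)
            have : ({-x, -x-a, -(x+x)} : Finset A).card ≤ 3 := by
              apply le_trans (Finset.card_insert_le _ _)
              have := Finset.card_insert_le (-x-a) ({-(x+x)} : Finset A)
              simp at this ⊢; omega
            omega
          omega
        omega
      obtain ⟨y, hyD, hyy⟩ := exists_avoid_double hodd {0, a, x, -x, -x-a, -(x+x)} (-x) (by omega)
      simp only [Finset.mem_insert, Finset.mem_singleton, not_or] at hyD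
      obtain ⟨hy0, hya, hyx, hynx, hynxa, hynxx⟩ := hyD
      set z := -x - y with hz
      have hz0 : z ≠ 0 := by
        simp only [hz]; intro h; exact hynx
          (sub_eq_zero.mp ((by abel : y - (-x) = (0:A) - (-x - y)).trans (sub_eq_zero_of_eq h.symm)))
      have hza : z ≠ a := by
        simp only [hz]; intro h; exact hynxa
          (sub_eq_zero.mp ((by abel : y - (-x - a) = a - (-x - y)).trans (sub_eq_zero_of_eq h.symm)))
      have hzx : z ≠ x := by
        simp only [hz]; intro h; exact hynxx
          (sub_eq_zero.mp ((by abel : y - (-(x + x)) = x - (-x - y)).trans (sub_eq_zero_of_eq h.symm)))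
      have hzy : z ≠ y := by
        simp only [hz]; intro h; exact hyy
          (sub_eq_zero.mp ((by abel : (y + y) - (-x) = y - (-x - y)).trans (sub_eq_zero_of_eq h.symm)))
      -- symmetric part
      set F : Finset A := {0, a, -a, x, -x, y, -y, z, -z} with hF
      have hF0 : (0:A) ∈ F := by simp [hF]
      have hFsym : ∀ w ∈ F, -w ∈ F := by
        intro w hw
        simp only [hF, Finset.mem_insert, Finset.mem_singleton] at hw ⊢
        rcases hw with rfl|rfl|rfl|rfl|rfl|rfl|rfl|rfl|rfl <;> simp
      have hFcard : F.card ≤ 9 := by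
        rw [hF]
        calc ({0, a, -a, x, -x, y, -y, z, -z} : Finset A).card
            ≤ ({a, -a, x, -x, y, -y, z, -z} : Finset A).card + 1 := Finset.card_insert_le _ _
          _ ≤ (({-a, x, -x, y, -y, z, -z} : Finset A).card + 1) + 1 := by
              have := Finset.card_insert_le a ({-a, x, -x, y, -y, z, -z} : Finset A); omega
          _ ≤ 9 := by
              have h1 := Finset.card_insert_le (-a) ({x, -x, y, -y, z, -z} : Finset A)
              have h2 := Finset.card_insert_le x ({-x, y, -y, z, -z} : Finset A)
              have h3 := Finset.card_insert_le (-x) ({y, -y, z, -z} : Finset A)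
              have h4 := Finset.card_insert_le y ({-y, z, -z} : Finset A)
              have h5 := Finset.card_insert_le (-y) ({z, -z} : Finset A)
              have h6 := Finset.card_insert_le z ({-z} : Finset A)
              simp only [Finset.card_singleton] at h6
              omega
      have hm : 2 * ((t - 3)/2) = t - 3 := by omega
      obtain ⟨Ssym, hScard, hSsym, hSdisj⟩ := exists_sym_avoiding hodd ((t-3)/2) F hF0 hFsym (by omega)
      have hxS : x ∉ Ssym := fun h => (Finset.disjoint_left.mp hSdisj) h (by simp [hF])
      have hyS : y ∉ Ssym := fun h => (Finset.disjoint_left.mp hSdisj) h (by simp [hF])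
      have hzS : z ∉ Ssym := fun h => (Finset.disjoint_left.mp hSdisj) h (by simp [hF])
      refine ⟨insert x (insert y (insert z Ssym)), ?_, ?_, ?_, ?_⟩
      · rw [Finset.card_insert_of_notMem (by simp [hyx, Ne.symm hzx, hxS] <;> tauto),
          Finset.card_insert_of_notMem (by simp [Ne.symm hzy, hyS] <;> tauto),
          Finset.card_insert_of_notMem hzS, hScard]
        omega
      · simp only [Finset.mem_insert, not_or]
        refine ⟨Ne.symm hx0, Ne.symm hy0, Ne.symm hz0,
          fun h => (Finset.disjoint_left.mp hSdisj) h hF0⟩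
      · simp only [Finset.mem_insert, not_or]
        exact ⟨Ne.symm hxa, Ne.symm hya, Ne.symm hza,
          fun h => (Finset.disjoint_left.mp hSdisj) h (by simp [hF])⟩
      · rw [Finset.sum_insert (by simp [hyx, Ne.symm hzx, hxS] <;> tauto),
          Finset.sum_insert (by simp [Ne.symm hzy, hyS] <;> tauto),
          Finset.sum_insert hzS, odd_sum_sym_eq_zero hodd hSsym]
        simp only [hz]; abel
end Grp2
section Oracles
variable {A : Type} [AddCommGroup A] [Fintype A] [DecidableEq A]

lemma card3_le {b c d : A} : ({b, c, d} : Finset A).card ≤ 3 := by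
  apply le_trans (Finset.card_insert_le _ _)
  have := Finset.card_insert_le c ({d} : Finset A)
  simp at this ⊢; omega

lemma card2_le {b c : A} : ({b, c} : Finset A).card ≤ 2 := by
  have := Finset.card_insert_le b ({c} : Finset A)
  simp at this ⊢; omega

lemma oracle_odd_step (hodd : Odd (Fintype.card A)) (h5 : 5 ≤ Fintype.card A)
    {a W : A} (ha : a ≠ 0) (hW : W ≠ a) {t : ℕ} (ht1 : 1 ≤ t) (ht : t + 3 ≤ Fintype.card A) :
    ∃ S : Finset A, S.card = t ∧ (∀ c ∈ S, c ≠ 0) ∧ a ∉ S ∧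
      (a + ∑ x ∈ S, x) ∉ S ∧ a + ∑ x ∈ S, x ≠ W := by
  rcases eq_or_lt_of_le ht1 with h1 | h2
  · -- t = 1
    obtain ⟨x, hx⟩ := exists_outside ({0, a, W - a} : Finset A) (lt_of_le_of_lt card3_le (by omega))
    simp only [Finset.mem_insert, Finset.mem_singleton, not_or] at hx
    obtain ⟨hx0, hxa, hxW⟩ := hx
    refine ⟨{x}, by simp [← h1], by simpa using hx0, by simpa using (Ne.symm hxa), ?_, ?_⟩
    · simp only [Finset.sum_singleton, Finset.mem_singleton]
      intro h
      exact ha (by simpa using h)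
    · simp only [Finset.sum_singleton]
      intro h
      exact hxW (eq_sub_of_add_eq' h)
  · obtain ⟨S, hcard, h0S, haS, hsum⟩ := exists_zero_sum_subset hodd ha h2 ht
    exact ⟨S, hcard, fun c hc hc0 => h0S (hc0 ▸ hc), haS,
      by rw [hsum, add_zero]; exact haS, by rw [hsum, add_zero]; exact Ne.symm hW⟩

lemma oracle_odd_root (hodd : Odd (Fintype.card A)) (h5 : 5 ≤ Fintype.card A)
    {t : ℕ} (ht2 : 2 ≤ t) (ht : t + 3 ≤ Fintype.card A) :
    ∃ S : Finset A, S.card = t ∧ (∀ c ∈ S, c ≠ 0) ∧ (∑ x ∈ S, x) ∉ S := by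
  have : Nontrivial A := Fintype.one_lt_card_iff_nontrivial.mp (by omega)
  obtain ⟨a, ha⟩ := exists_ne (0 : A)
  obtain ⟨S, hcard, h0S, haS, hsum⟩ := exists_zero_sum_subset hodd ha ht2 ht
  exact ⟨S, hcard, fun c hc hc0 => h0S (hc0 ▸ hc), by rw [hsum]; exact h0S⟩

lemma oracle_reg_step (hodd : Odd (Fintype.card A)) (h5 : 5 ≤ Fintype.card A)
    {a W : A} (hW : W ≠ a) :
    ∃ S : Finset A, S.card = Fintype.card A - 3 ∧ a ∉ S ∧
      (a + ∑ x ∈ S, x) ∉ S ∧ a + ∑ x ∈ S, x ≠ W := by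
  obtain ⟨x, hxD, hxx⟩ := exists_avoid_double hodd {a, -(a+a)} (-a) (by have := card2_le (b := a) (c := -(a+a)); omega)
  simp only [Finset.mem_insert, Finset.mem_singleton, not_or] at hxD
  obtain ⟨hxa, hxaa⟩ := hxD
  set y := -a - x with hy
  have hay : a ≠ y := by
    simp only [hy]; intro h; exact hxaa
      (sub_eq_zero.mp ((by abel : x - (-(a+a)) = a - (-a - x)).trans (sub_eq_zero_of_eq h)))
  have hxy : x ≠ y := by
    simp only [hy]; intro h; exact hxx
      (sub_eq_zero.mp ((by abel : (x + x) - (-a) = x - (-a - x)).trans (sub_eq_zero_of_eq h)))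
  set e : Finset A := {a, x, y} with he
  have hecard : e.card = 3 := by
    rw [he, Finset.card_insert_of_notMem (by simp [Ne.symm hxa, hay]),
      Finset.card_insert_of_notMem (by simp [hxy]), Finset.card_singleton]
  have hesum : ∑ v ∈ e, v = 0 := by
    rw [he, Finset.sum_insert (by simp [Ne.symm hxa, hay]),
      Finset.sum_insert (by simp [hxy]), Finset.sum_singleton, hy]
    abel
  have hsum : ∑ v ∈ Finset.univ \ e, v = 0 := by
    rw [Finset.sum_sdiff_eq_sub (Finset.subset_univ _), odd_sum_univ hodd, hesum]; simp
  refine ⟨Finset.univ \ e, ?_, by simp [he], ?_, ?_⟩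
  · rw [Finset.card_sdiff_of_subset (Finset.subset_univ _), Finset.card_univ, hecard]
  · rw [hsum, add_zero]; simp [he]
  · rw [hsum, add_zero]; exact Ne.symm hW

lemma oracle_reg_root (hodd : Odd (Fintype.card A)) (h3 : ∃ x : A, x + x + x ≠ 0) :
    ∃ S : Finset A, S.card = Fintype.card A - 2 ∧ (∑ x ∈ S, x) ∉ S := by
  obtain ⟨x, hx⟩ := h3
  have hxy : x ≠ -(x+x) := by
    intro h; exact hx
      (sub_eq_zero.mp ((by abel : (x+x+x) - 0 = x - (-(x+x))).trans (sub_eq_zero_of_eq h)))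
  set e : Finset A := {x, -(x+x)} with he
  have hecard : e.card = 2 := by
    rw [he, Finset.card_insert_of_notMem (by simpa using hxy), Finset.card_singleton]
  have hesum : ∑ v ∈ e, v = -x := by
    rw [he, Finset.sum_insert (by simpa using hxy), Finset.sum_singleton]; abel
  have hsum : ∑ v ∈ Finset.univ \ e, v = x := by
    rw [Finset.sum_sdiff_eq_sub (Finset.subset_univ _), odd_sum_univ hodd, hesum]; simp
  refine ⟨Finset.univ \ e, ?_, ?_⟩
  · rw [Finset.card_sdiff_of_subset (Finset.subset_univ _), Finset.card_univ, hecard]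
  · rw [hsum]; simp [he]

lemma oracle_ereg_step (h10 : 10 ≤ Fintype.card A)
    (H2 : ∀ c : A, (Finset.univ.filter (fun y : A => y + y = c)).card ≤ 4)
    {a W : A} (hW : W ≠ a) :
    ∃ S : Finset A, S.card = Fintype.card A - 4 ∧ a ∉ S ∧
      (a + ∑ x ∈ S, x) ∉ S ∧ a + ∑ x ∈ S, x ≠ W := by
  set σ : A := ∑ v : A, v with hσ
  obtain ⟨x, hxa'⟩ := exists_outside ({a} : Finset A) (by simp; omega)
  have hxa : x ≠ a := by simpa using hxa'
  set D : Finset A := insert a (insert x (insert (σ-a-x-a) (insert (σ-a-x-x)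
    (Finset.univ.filter (fun y : A => y + y = σ-a-x))))) with hD
  have hDcard : D.card ≤ 8 := by
    have h0 := H2 (σ-a-x)
    calc D.card ≤ _ + 1 := Finset.card_insert_le _ _
      _ ≤ _ := by
        have h1 := Finset.card_insert_le x (insert (σ-a-x-a) (insert (σ-a-x-x)
          (Finset.univ.filter (fun y : A => y + y = σ-a-x))))
        have h2 := Finset.card_insert_le (σ-a-x-a) (insert (σ-a-x-x)
          (Finset.univ.filter (fun y : A => y + y = σ-a-x)))
        have h3 := Finset.card_insert_le (σ-a-x-x)
          (Finset.univ.filter (fun y : A => y + y = σ-a-x))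
        omega
  obtain ⟨y, hyD⟩ := exists_outside D (by omega)
  simp only [hD, Finset.mem_insert, Finset.mem_filter, Finset.mem_univ, true_and, not_or] at hyD
  obtain ⟨hya, hyx, hyza, hyzx, hyy⟩ := hyD
  set z := σ - a - x - y with hz
  have hza : z ≠ a := by
    simp only [hz]; intro h
    exact hyza (sub_eq_zero.mp ((by abel : y - (σ-a-x-a) = a - (σ-a-x-y)).trans (sub_eq_zero_of_eq h.symm)))
  have hzx : z ≠ x := by
    simp only [hz]; intro h
    exact hyzx (sub_eq_zero.mp ((by abel : y - (σ-a-x-x) = x - (σ-a-x-y)).trans (sub_eq_zero_of_eq h.symm)))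
  have hzy : z ≠ y := by
    simp only [hz]; intro h
    exact hyy (sub_eq_zero.mp ((by abel : (y + y) - (σ-a-x) = y - (σ-a-x-y)).trans (sub_eq_zero_of_eq h.symm)))
  set e : Finset A := {a, x, y, z} with he
  have hecard : e.card = 4 := by
    rw [he, Finset.card_insert_of_notMem (by simp [Ne.symm hxa, Ne.symm hya, Ne.symm hza]),
      Finset.card_insert_of_notMem (by simp [Ne.symm hyx, Ne.symm hzx]),
      Finset.card_insert_of_notMem (by simp [Ne.symm hzy]), Finset.card_singleton]
  have hesum : ∑ v ∈ e, v = σ := by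
    rw [he, Finset.sum_insert (by simp [Ne.symm hxa, Ne.symm hya, Ne.symm hza]),
      Finset.sum_insert (by simp [Ne.symm hyx, Ne.symm hzx]),
      Finset.sum_insert (by simp [Ne.symm hzy]), Finset.sum_singleton, hz]
    abel
  have hsum : ∑ v ∈ Finset.univ \ e, v = 0 := by
    rw [Finset.sum_sdiff_eq_sub (Finset.subset_univ _), ← hσ, hesum]; simp
  refine ⟨Finset.univ \ e, ?_, by simp [he], ?_, ?_⟩
  · rw [Finset.card_sdiff_of_subset (Finset.subset_univ _), Finset.card_univ, hecard]
  · rw [hsum, add_zero]; simp [he]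
  · rw [hsum, add_zero]; exact Ne.symm hW

lemma oracle_ereg_root (h10 : 10 ≤ Fintype.card A)
    (H2 : ∀ c : A, (Finset.univ.filter (fun y : A => y + y = c)).card ≤ 4) :
    ∃ S : Finset A, S.card = Fintype.card A - 3 ∧ (∑ x ∈ S, x) ∉ S := by
  set σ : A := ∑ v : A, v with hσ
  have : Nontrivial A := Fintype.one_lt_card_iff_nontrivial.mp (by omega)
  set x : A := 0
  set D : Finset A := insert x (insert (σ-x-x-x)
    (Finset.univ.filter (fun y : A => y + y = σ-x-x))) with hD
  have hDcard : D.card ≤ 6 := by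
    rw [hD]
    have h0 := H2 (σ-x-x)
    have h1 := Finset.card_insert_le (σ-x-x-x) (Finset.univ.filter (fun y : A => y + y = σ-x-x))
    have h2 := Finset.card_insert_le x (insert (σ-x-x-x)
      (Finset.univ.filter (fun y : A => y + y = σ-x-x)))
    omega
  obtain ⟨y, hyD⟩ := exists_outside D (by omega)
  simp only [hD, Finset.mem_insert, Finset.mem_filter, Finset.mem_univ, true_and, not_or] at hyD
  obtain ⟨hyx, hyzx, hyy⟩ := hyD
  set z := σ - x - x - y with hz
  have hzx : z ≠ x := by
    simp only [hz]; intro h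
    exact hyzx (sub_eq_zero.mp ((by abel : y - (σ-x-x-x) = x - (σ-x-x-y)).trans (sub_eq_zero_of_eq h.symm)))
  have hzy : z ≠ y := by
    simp only [hz]; intro h
    exact hyy (sub_eq_zero.mp ((by abel : (y+y) - (σ-x-x) = y - (σ-x-x-y)).trans (sub_eq_zero_of_eq h.symm)))
  set e : Finset A := {x, y, z} with he
  have hecard : e.card = 3 := by
    rw [he, Finset.card_insert_of_notMem (by simp [Ne.symm hyx, Ne.symm hzx]),
      Finset.card_insert_of_notMem (by simp [Ne.symm hzy]), Finset.card_singleton]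
  have hesum : ∑ v ∈ e, v = σ - x := by
    rw [he, Finset.sum_insert (by simp [Ne.symm hyx, Ne.symm hzx]),
      Finset.sum_insert (by simp [Ne.symm hzy]), Finset.sum_singleton, hz]
    abel
  have hsum : ∑ v ∈ Finset.univ \ e, v = x := by
    rw [Finset.sum_sdiff_eq_sub (Finset.subset_univ _), ← hσ, hesum]; abel
  refine ⟨Finset.univ \ e, ?_, ?_⟩
  · rw [Finset.card_sdiff_of_subset (Finset.subset_univ _), Finset.card_univ, hecard]
  · rw [hsum]; simp [he]

end Oracles
section Tree
open SimpleGraph Finset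
variable {V : Type} [Fintype V] [DecidableEq V] {T : SimpleGraph V} [DecidableRel T.Adj]

lemma adj_dist_ne (hT : T.IsTree) (r : V) {u v : V} (h : T.Adj u v) :
    T.dist r u ≠ T.dist r v := by
  intro heq
  obtain ⟨p, hppath, hplen⟩ := hT.isConnected.exists_path_of_dist r u
  have hvp : v ∉ p.support := by
    intro hv
    have h1 := SimpleGraph.Walk.length_takeUntil_le p hv
    have h2 : T.dist r v ≤ (p.takeUntil v hv).length := SimpleGraph.dist_le _
    have hspec := p.take_spec hv
    have hlen : (p.takeUntil v hv).length + (p.dropUntil v hv).length = p.length := by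
      rw [← SimpleGraph.Walk.length_append, hspec]
    have h0 : (p.dropUntil v hv).length = 0 := by omega
    exact h.ne' (SimpleGraph.Walk.eq_of_length_eq_zero h0)
  have hq1path : (SimpleGraph.Walk.cons h.symm p.reverse).IsPath := by
    apply SimpleGraph.Walk.IsPath.cons hppath.reverse
    rw [SimpleGraph.Walk.support_reverse, List.mem_reverse]
    exact hvp
  obtain ⟨q2, hq2path, hq2len⟩ := hT.isConnected.exists_path_of_dist v r
  have heq2 := (hT.existsUnique_path v r).unique hq1path hq2path
  have hlen1 : (SimpleGraph.Walk.cons h.symm p.reverse).length = T.dist r u + 1 := by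
    rw [SimpleGraph.Walk.length_cons, SimpleGraph.Walk.length_reverse, hplen]
  have hll : T.dist r u + 1 = T.dist v r := by
    rw [← hlen1, heq2, hq2len]
  rw [SimpleGraph.dist_comm (u := v)] at hll
  omega

lemma adj_dist_cases (hT : T.IsTree) (r : V) {u v : V} (h : T.Adj u v) :
    T.dist r u + 1 = T.dist r v ∨ T.dist r v + 1 = T.dist r u := by
  have h1 : T.dist r v ≤ T.dist r u + T.dist u v := hT.isConnected.dist_triangle
  have h2 : T.dist r u ≤ T.dist r v + T.dist v u := hT.isConnected.dist_triangle
  rw [SimpleGraph.dist_eq_one_iff_adj.mpr h] at h1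
  rw [SimpleGraph.dist_eq_one_iff_adj.mpr h.symm] at h2
  have h3 := adj_dist_ne hT r h
  omega

lemma exists_parent (hT : T.IsTree) (r : V) {v : V} (hv : v ≠ r) :
    ∃ u, T.Adj u v ∧ T.dist r u + 1 = T.dist r v := by
  have hpos : 0 < T.dist r v := hT.isConnected.pos_dist_of_ne (Ne.symm hv)
  obtain ⟨p, hppath, hplen⟩ := hT.isConnected.exists_path_of_dist v r
  obtain ⟨u, hadj, q, hq⟩ := SimpleGraph.Walk.exists_eq_cons_of_ne hv p
  have hqlen : q.length + 1 = T.dist r v := by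
    have : p.length = q.length + 1 := by rw [hq, SimpleGraph.Walk.length_cons]
    rw [SimpleGraph.dist_comm (u := v)] at hplen
    omega
  have hdu : T.dist r u ≤ q.length := by
    have := SimpleGraph.dist_le q.reverse
    rwa [SimpleGraph.Walk.length_reverse] at this
  have htri : T.dist r v ≤ T.dist r u + 1 := by
    have h1 : T.dist r v ≤ T.dist r u + T.dist u v := hT.isConnected.dist_triangle
    rwa [SimpleGraph.dist_eq_one_iff_adj.mpr hadj.symm] at h1
  exact ⟨u, hadj.symm, by omega⟩

lemma unique_parent (hT : T.IsTree) (r : V) {v u₁ u₂ : V} (h1 : T.Adj u₁ v) (h2 : T.Adj u₂ v)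
    (hd1 : T.dist r u₁ + 1 = T.dist r v) (hd2 : T.dist r u₂ + 1 = T.dist r v) : u₁ = u₂ := by
  have build : ∀ (u : V) (h : T.Adj u v), T.dist r u + 1 = T.dist r v →
      ∃ q : T.Walk v r, q.IsPath ∧ q.getVert 1 = u := by
    intro u h hd
    obtain ⟨p, hppath, hplen⟩ := hT.isConnected.exists_path_of_dist r u
    have hvp : v ∉ p.support := by
      intro hv
      have hl1 := SimpleGraph.Walk.length_takeUntil_le p hv
      have hl2 : T.dist r v ≤ (p.takeUntil v hv).length := SimpleGraph.dist_le _
      omega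
    refine ⟨SimpleGraph.Walk.cons h.symm p.reverse, ?_, ?_⟩
    · apply SimpleGraph.Walk.IsPath.cons hppath.reverse
      rw [SimpleGraph.Walk.support_reverse, List.mem_reverse]
      exact hvp
    · exact (SimpleGraph.Walk.getVert_cons_succ (n := 0) _ _).trans (SimpleGraph.Walk.getVert_zero _)
  obtain ⟨q1, hq1, hg1⟩ := build u₁ h1 hd1
  obtain ⟨q2, hq2, hg2⟩ := build u₂ h2 hd2
  have := (hT.existsUnique_path v r).unique hq1 hq2
  rw [← hg1, ← hg2, this]

variable (T) in
/-- children of `v` in the tree rooted at `r`. -/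
noncomputable def chl [DecidableRel T.Adj] (r v : V) : Finset V :=
  (T.neighborFinset v).filter (fun u => T.dist r v < T.dist r u)

lemma mem_chl (hT : T.IsTree) {r v u : V} :
    u ∈ chl T r v ↔ T.Adj v u ∧ T.dist r u = T.dist r v + 1 := by
  unfold chl
  rw [Finset.mem_filter, SimpleGraph.mem_neighborFinset]
  constructor
  · rintro ⟨ha, hd⟩
    rcases adj_dist_cases hT r ha with hc | hc <;> [exact ⟨ha, hc.symm⟩; omega]
  · rintro ⟨ha, hd⟩
    exact ⟨ha, by omega⟩

/-- the parent of `v` in the tree rooted at `r` (junk value `r` at the root). -/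
noncomputable def par (hT : T.IsTree) (r v : V) : V :=
  if h : v = r then r else Classical.choose (exists_parent hT r h)

lemma par_spec (hT : T.IsTree) {r v : V} (hv : v ≠ r) :
    T.Adj (par hT r v) v ∧ T.dist r (par hT r v) + 1 = T.dist r v := by
  rw [par, dif_neg hv]
  exact Classical.choose_spec (exists_parent hT r hv)

lemma par_eq_of (hT : T.IsTree) {r v u : V} (hv : v ≠ r) (h : T.Adj u v)
    (hd : T.dist r u + 1 = T.dist r v) : par hT r v = u :=
  unique_parent hT r (par_spec hT hv).1 h (par_spec hT hv).2 hd

lemma chl_par (hT : T.IsTree) {r v c : V} (hc : c ∈ chl T r v) :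
    c ≠ r ∧ par hT r c = v := by
  rw [mem_chl hT] at hc
  have hcr : c ≠ r := by
    intro h
    subst h
    have := hc.2
    simp [SimpleGraph.dist_self] at this
  exact ⟨hcr, par_eq_of hT hcr hc.1 (by omega)⟩

lemma neighborFinset_eq_insert (hT : T.IsTree) {r v : V} (hv : v ≠ r) :
    T.neighborFinset v = insert (par hT r v) (chl T r v) ∧ par hT r v ∉ chl T r v := by
  constructor
  · ext u
    rw [Finset.mem_insert, SimpleGraph.mem_neighborFinset, mem_chl hT]
    constructor
    · intro ha
      rcases adj_dist_cases hT r ha with hc | hc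
      · exact Or.inr ⟨ha, hc.symm⟩
      · exact Or.inl (par_eq_of hT hv ha.symm (by omega)).symm
    · rintro (rfl | ⟨ha, _⟩)
      · exact ((par_spec hT hv).1).symm
      · exact ha
  · rw [mem_chl hT]
    rintro ⟨_, hd⟩
    have := (par_spec hT hv).2
    omega

lemma neighborFinset_eq_root (hT : T.IsTree) (r : V) :
    T.neighborFinset r = chl T r r := by
  ext u
  rw [SimpleGraph.mem_neighborFinset, mem_chl hT]
  constructor
  · intro ha
    rcases adj_dist_cases hT r ha with hc | hc
    · exact ⟨ha, hc.symm⟩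
    · rw [SimpleGraph.dist_self] at hc; omega
  · exact fun h => h.1

lemma card_chl (hT : T.IsTree) {r v : V} (hv : v ≠ r) :
    (chl T r v).card + 1 = T.degree v := by
  obtain ⟨hsplit, hnotmem⟩ := neighborFinset_eq_insert hT hv
  rw [← SimpleGraph.card_neighborFinset_eq_degree, hsplit,
    Finset.card_insert_of_notMem hnotmem]

lemma card_chl_root (hT : T.IsTree) (r : V) : (chl T r r).card = T.degree r := by
  rw [← SimpleGraph.card_neighborFinset_eq_degree, neighborFinset_eq_root hT]

lemma dist_lt_card (hT : T.IsTree) (r v : V) : T.dist r v < Fintype.card V := by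
  obtain ⟨p, hppath, hplen⟩ := hT.isConnected.exists_path_of_dist r v
  rw [← hplen]
  exact hppath.length_lt

end Tree


/-- A `𝒢`-twin edge coloring of `G`: a proper edge labeling `f : E(G) → 𝒢` such that
the induced weighted degrees `w(v) = ∑_{u ∈ N(v)} f(uv)` differ on adjacent vertices. -/
def IsTwinEdgeColoring {V : Type} [Fintype V] (G : SimpleGraph V) [DecidableRel G.Adj]
    {A : Type} [AddCommGroup A] (f : Sym2 V → A) : Prop :=
  (∀ u v w : V, G.Adj u v → G.Adj u w → v ≠ w → f s(u, v) ≠ f s(u, w)) ∧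
  (∀ u v : V, G.Adj u v →
    ∑ x ∈ G.neighborFinset u, f s(x, u) ≠ ∑ x ∈ G.neighborFinset v, f s(x, v))

/-- The set of integers `k ≥ 2` such that for every Abelian group `𝒢` of order `k`
there exists a `𝒢`-twin edge coloring of `G`.  The group twin chromatic index
`χ'_g(G)` is the least element of this set. -/
def TwinSet {V : Type} [Fintype V] (G : SimpleGraph V) [DecidableRel G.Adj] : Set ℕ :=
  {k | 2 ≤ k ∧ ∀ (A : Type) [AddCommGroup A] [Fintype A], Fintype.card A = k →
      ∃ f : Sym2 V → A, IsTwinEdgeColoring G f}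

/-- A tree is `r`-regular if every non-leaf vertex has degree `r`. -/
def IsRegularTreeDeg {V : Type} [Fintype V] (G : SimpleGraph V) [DecidableRel G.Adj]
    (r : ℕ) : Prop :=
  ∀ v : V, G.degree v ≠ 1 → G.degree v = r

section Framework
open SimpleGraph Finset
variable {V : Type} [Fintype V] [DecidableEq V] {T : SimpleGraph V} [DecidableRel T.Adj]
variable {A : Type} [AddCommGroup A] [DecidableEq A]

variable (T) in
/-- the induced weight of a vertex, given edge labels `g` (label of edge to parent). -/
noncomputable def wgt (r : V) (g : V → A) (v : V) : A :=
  (if v = r then 0 else g v) + ∑ c ∈ chl T r v, g c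

variable (T) in
/-- All the local conditions needed at an internal vertex. -/
def Cond (hT : T.IsTree) (r : V) (Pcol : A → Prop) (g : V → A) (v : V) : Prop :=
  Set.InjOn g (chl T r v) ∧
  (∀ c ∈ chl T r v, v ≠ r → g c ≠ g v) ∧
  (∀ c ∈ chl T r v, Pcol (g c)) ∧
  (∀ c ∈ chl T r v, wgt T r g v ≠ g c) ∧
  (v ≠ r → wgt T r g v ≠ wgt T r g (par hT r v))

lemma stage (hT : T.IsTree) (r : V) (hr : 2 ≤ T.degree r) (Pcol : A → Prop)
    (Hroot : ∃ S : Finset A, S.card = T.degree r ∧ (∀ c ∈ S, Pcol c) ∧ (∑ x ∈ S, x) ∉ S)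
    (Hstep : ∀ v : V, v ≠ r → 2 ≤ T.degree v → ∀ a W : A, Pcol a → W ≠ a →
      ∃ S : Finset A, S.card = T.degree v - 1 ∧ (∀ c ∈ S, Pcol c) ∧ a ∉ S ∧
        (a + ∑ x ∈ S, x) ∉ S ∧ a + ∑ x ∈ S, x ≠ W) :
    ∀ n : ℕ, ∃ g : V → A, ∀ v : V, 2 ≤ T.degree v → T.dist r v < n →
      Cond T hT r Pcol g v := by
  intro n
  induction n with
  | zero => exact ⟨fun _ => 0, fun v _ h => absurd h (by omega)⟩
  | succ n ih =>
    obtain ⟨g, hg⟩ := ih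
    -- choose the color sets at the new frontier
    have key : ∀ p : V, ∃ S : Finset A, (T.dist r p = n ∧ 2 ≤ T.degree p) →
        S.card = (chl T r p).card ∧ (∀ c ∈ S, Pcol c) ∧ (p ≠ r → g p ∉ S) ∧
        ((if p = r then 0 else g p) + ∑ x ∈ S, x) ∉ S ∧
        (p ≠ r → (if p = r then 0 else g p) + ∑ x ∈ S, x ≠ wgt T r g (par hT r p)) := by
      intro p
      by_cases hp : T.dist r p = n ∧ 2 ≤ T.degree p
      swap
      · exact ⟨∅, fun h => absurd h hp⟩
      by_cases hpr : p = r
      · subst hpr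
        obtain ⟨S, hc, hpc, hs⟩ := Hroot
        refine ⟨S, fun _ => ⟨?_, hpc, ?_, ?_, ?_⟩⟩
        · rw [hc, card_chl_root hT]
        · simp
        · simpa using hs
        · simp
      · -- internal non-root vertex at the frontier
        have hq := par_spec hT hpr
        have hn1 : 1 ≤ n := by
          rcases Nat.eq_zero_or_pos n with h0 | h
          · exfalso
            apply hpr
            have hd0 := hp.1
            rw [h0] at hd0
            rw [SimpleGraph.dist_comm] at hd0
            exact hT.isConnected.dist_eq_zero_iff.mp hd0
          · omega
        set q := par hT r p with hqdef
        have hqd : T.dist r q < n := by omega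
        have hppar : p ∈ chl T r q := by
          rw [mem_chl hT]
          exact ⟨hq.1, by omega⟩
        have hqdeg : 2 ≤ T.degree q := by
          by_cases hqr : q = r
          · rw [hqr]; exact hr
          · have hq2 := par_spec hT hqr
            have h1 : par hT r q ∈ T.neighborFinset q := by
              rw [SimpleGraph.mem_neighborFinset]; exact hq2.1.symm
            have h2 : p ∈ T.neighborFinset q := by
              rw [SimpleGraph.mem_neighborFinset]; exact hq.1
            have hne : par hT r q ≠ p := by
              intro h
              have := hq2.2
              rw [h] at this
              omega
            rw [← SimpleGraph.card_neighborFinset_eq_degree]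
            exact Finset.one_lt_card.mpr ⟨_, h1, _, h2, hne⟩
        have hCq := hg q hqdeg hqd
        have hPa : Pcol (g p) := hCq.2.2.1 p hppar
        have hWa : wgt T r g q ≠ g p := hCq.2.2.2.1 p hppar
        obtain ⟨S, hc, hpc, haS, hwS, hwW⟩ := Hstep p hpr hp.2 (g p) (wgt T r g q) hPa hWa
        refine ⟨S, fun _ => ⟨?_, hpc, fun _ => haS, ?_, fun _ => ?_⟩⟩
        · rw [hc]
          have := card_chl hT hpr
          omega
        · rw [if_neg hpr]; exact hwS
        · rw [if_neg hpr]; exact hwW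
    choose Sf hSf using key
    -- choose injections from children onto the color sets
    have hbij : ∀ p : V, ∃ e : V → A, (T.dist r p = n ∧ 2 ≤ T.degree p) →
        Set.InjOn e (chl T r p) ∧ (∀ c ∈ chl T r p, e c ∈ Sf p) ∧
        (∑ c ∈ chl T r p, e c = ∑ x ∈ Sf p, x) := by
      intro p
      by_cases hp : T.dist r p = n ∧ 2 ≤ T.degree p
      swap
      · exact ⟨fun _ => 0, fun h => absurd h hp⟩
      have hcard : (chl T r p).card = (Sf p).card := ((hSf p hp).1).symm
      set e0 := Finset.equivOfCardEq hcard with he0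
      set e : V → A := fun c => if hc : c ∈ chl T r p then (e0 ⟨c, hc⟩ : A) else 0 with he
      have heval : ∀ (c : V) (hc : c ∈ chl T r p), e c = (e0 ⟨c, hc⟩ : A) := by
        intro c hc
        simp only [he]
        rw [dif_pos hc]
      set einv : A → V := fun y => if hy : y ∈ Sf p then (e0.symm ⟨y, hy⟩ : V) else p with hei
      have hieval : ∀ (y : A) (hy : y ∈ Sf p), einv y = (e0.symm ⟨y, hy⟩ : V) := by
        intro y hy
        simp only [hei]
        rw [dif_pos hy]
      refine ⟨e, fun _ => ⟨?_, ?_, ?_⟩⟩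
      · intro c1 hc1 c2 hc2 hcc
        simp only [Finset.mem_coe] at hc1 hc2
        rw [heval c1 hc1, heval c2 hc2] at hcc
        have := e0.injective (Subtype.ext hcc)
        exact congrArg Subtype.val this
      · intro c hc
        rw [heval c hc]
        exact (e0 ⟨c, hc⟩).2
      · refine Finset.sum_nbij' e einv ?_ ?_ ?_ ?_ ?_
        · intro c hc
          rw [heval c hc]; exact (e0 ⟨c, hc⟩).2
        · intro y hy
          rw [hieval y hy]; exact (e0.symm ⟨y, hy⟩).2
        · intro c hc
          rw [heval c hc, hieval _ (e0 ⟨c, hc⟩).2]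
          have h1 : (⟨(e0 ⟨c, hc⟩ : A), (e0 ⟨c, hc⟩).2⟩ : {x // x ∈ Sf p}) = e0 ⟨c, hc⟩ :=
            Subtype.ext rfl
          rw [h1, Equiv.symm_apply_apply]
        · intro y hy
          rw [hieval y hy, heval _ (e0.symm ⟨y, hy⟩).2]
          have h1 : (⟨(e0.symm ⟨y, hy⟩ : V), (e0.symm ⟨y, hy⟩).2⟩ : {x // x ∈ chl T r p}) =
              e0.symm ⟨y, hy⟩ := Subtype.ext rfl
          rw [h1, Equiv.apply_symm_apply]
        · intro c hc
          rw [heval c hc]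
    choose ef hef using hbij
    -- the new labelling
    set g' : V → A := fun c => if T.dist r c = n + 1 then ef (par hT r c) c else g c with hg'def
    have hsame : ∀ v : V, T.dist r v ≤ n → g' v = g v := by
      intro v hv
      simp only [hg'def]
      rw [if_neg (by omega)]
    have hchld : ∀ v : V, ∀ c ∈ chl T r v, T.dist r c = T.dist r v + 1 := by
      intro v c hc
      exact ((mem_chl hT).mp hc).2
    have hwgt_eq : ∀ v : V, T.dist r v < n → wgt T r g' v = wgt T r g v := by
      intro v hv
      unfold wgt
      congr 1
      · by_cases hvr : v = r
        · rw [if_pos hvr, if_pos hvr]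
        · rw [if_neg hvr, if_neg hvr, hsame v (by omega)]
      · apply Finset.sum_congr rfl
        intro c hc
        exact hsame c (by have := hchld v c hc; omega)
    refine ⟨g', fun v hdeg hdist => ?_⟩
    rcases Nat.lt_succ_iff_lt_or_eq.mp hdist with hlt | heq
    · -- old vertices : nothing changed
      have hCv := hg v hdeg hlt
      obtain ⟨c1, c2, c3, c4, c5⟩ := hCv
      have hgc : ∀ c ∈ chl T r v, g' c = g c := by
        intro c hc
        exact hsame c (by have := hchld v c hc; omega)
      refine ⟨?_, ?_, ?_, ?_, ?_⟩
      · intro x hx y hy hxy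
        simp only [Finset.mem_coe] at hx hy
        rw [hgc x hx, hgc y hy] at hxy
        exact c1 hx hy hxy
      · intro c hc hvr
        rw [hgc c hc, hsame v (by omega)]
        exact c2 c hc hvr
      · intro c hc
        rw [hgc c hc]
        exact c3 c hc
      · intro c hc
        rw [hgc c hc, hwgt_eq v hlt]
        exact c4 c hc
      · intro hvr
        have hpd : T.dist r (par hT r v) < n := by
          have := (par_spec hT hvr).2
          omega
        rw [hwgt_eq v hlt, hwgt_eq _ hpd]
        exact c5 hvr
    · -- frontier vertices
      have hp : T.dist r v = n ∧ 2 ≤ T.degree v := ⟨heq, hdeg⟩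
      obtain ⟨hcard, hpcS, hgnS, hwnS, hwnW⟩ := hSf v hp
      obtain ⟨einj, emem, esum⟩ := hef v hp
      have hgc : ∀ c ∈ chl T r v, g' c = ef v c := by
        intro c hc
        have hcd : T.dist r c = n + 1 := by rw [hchld v c hc, heq]
        have hpc := (chl_par hT hc).2
        simp only [hg'def]
        rw [if_pos hcd, hpc]
      have hgv : g' v = g v := hsame v (by omega)
      have hwv : wgt T r g' v = (if v = r then 0 else g v) + ∑ x ∈ Sf v, x := by
        unfold wgt
        congr 1
        · by_cases hvr : v = r
          · rw [if_pos hvr, if_pos hvr]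
          · rw [if_neg hvr, if_neg hvr, hgv]
        · rw [← esum]
          exact Finset.sum_congr rfl hgc
      refine ⟨?_, ?_, ?_, ?_, ?_⟩
      · intro x hx y hy hxy
        simp only [Finset.mem_coe] at hx hy
        rw [hgc x hx, hgc y hy] at hxy
        exact einj hx hy hxy
      · intro c hc hvr
        rw [hgc c hc, hgv]
        intro hco
        exact (hgnS hvr) (hco ▸ emem c hc)
      · intro c hc
        rw [hgc c hc]
        exact hpcS _ (emem c hc)
      · intro c hc
        rw [hgc c hc, hwv]
        intro hco
        exact hwnS (hco ▸ emem c hc)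
      · intro hvr
        rw [hwv]
        have hpd : T.dist r (par hT r v) < n := by
          have h2 := (par_spec hT hvr).2
          have hn1 : 1 ≤ n := by
            rcases Nat.eq_zero_or_pos n with h0 | h
            · exfalso
              apply hvr
              have hd0 := heq
              rw [h0] at hd0
              rw [SimpleGraph.dist_comm] at hd0
              exact hT.isConnected.dist_eq_zero_iff.mp hd0
            · omega
          omega
        rw [hwgt_eq _ hpd]
        exact hwnW hvr
end Framework
section Final
open SimpleGraph Finset
variable {V : Type} [Fintype V] [DecidableEq V] {T : SimpleGraph V} [DecidableRel T.Adj]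
variable {A : Type} [AddCommGroup A] [DecidableEq A]

theorem exists_twin_coloring (hT : T.IsTree) (Pcol : A → Prop) (r : V) (hr : 2 ≤ T.degree r)
    (Hroot : ∃ S : Finset A, S.card = T.degree r ∧ (∀ c ∈ S, Pcol c) ∧ (∑ x ∈ S, x) ∉ S)
    (Hstep : ∀ v : V, v ≠ r → 2 ≤ T.degree v → ∀ a W : A, Pcol a → W ≠ a →
      ∃ S : Finset A, S.card = T.degree v - 1 ∧ (∀ c ∈ S, Pcol c) ∧ a ∉ S ∧
        (a + ∑ x ∈ S, x) ∉ S ∧ a + ∑ x ∈ S, x ≠ W) :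
    ∃ f : Sym2 V → A, IsTwinEdgeColoring T f := by
  obtain ⟨g, hg⟩ := stage hT r hr Pcol Hroot Hstep (Fintype.card V)
  have hall : ∀ v, 2 ≤ T.degree v → Cond T hT r Pcol g v :=
    fun v h2 => hg v h2 (dist_lt_card hT r v)
  set F : V → V → A := fun u v =>
    if T.dist r u < T.dist r v then g v else if T.dist r v < T.dist r u then g u else 0 with hF
  have hFsymm : ∀ u v, F u v = F v u := by
    intro u v
    simp only [hF]
    split_ifs <;> first | rfl | omega
  set f : Sym2 V → A := Sym2.lift ⟨F, hFsymm⟩ with hf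
  have hfeval : ∀ u v, f s(u,v) = F u v := by
    intro u v
    simp only [hf, Sym2.lift_mk]
  have hf_par : ∀ v, v ≠ r → f s(par hT r v, v) = g v := by
    intro v hv
    rw [hfeval]
    simp only [hF]
    have := (par_spec hT hv).2
    rw [if_pos (by omega)]
  have hweight : ∀ u, ∑ x ∈ T.neighborFinset u, f s(x, u) = wgt T r g u := by
    intro u
    by_cases hur : u = r
    · rw [hur, neighborFinset_eq_root hT]
      unfold wgt
      rw [if_pos rfl, zero_add]
      apply Finset.sum_congr rfl
      intro c hc
      rw [hfeval]
      simp only [hF]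
      have h1 := ((mem_chl hT).mp hc).2
      have h0 : T.dist r r = 0 := SimpleGraph.dist_self
      rw [if_neg (by omega), if_pos (by omega)]
    · obtain ⟨hsplit, hnm⟩ := neighborFinset_eq_insert hT hur
      rw [hsplit, Finset.sum_insert hnm, hf_par u hur]
      unfold wgt
      rw [if_neg hur]
      congr 1
      apply Finset.sum_congr rfl
      intro c hc
      rw [hfeval]
      simp only [hF]
      have := ((mem_chl hT).mp hc).2
      rw [if_neg (by omega), if_pos (by omega)]
  have hclass : ∀ u x, T.Adj u x → x ∈ chl T r u ∨ (u ≠ r ∧ x = par hT r u) := by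
    intro u x hadj
    by_cases hur : u = r
    · left
      subst hur
      rw [← neighborFinset_eq_root hT, SimpleGraph.mem_neighborFinset]
      exact hadj
    · have hs := (neighborFinset_eq_insert hT hur).1
      have hx : x ∈ T.neighborFinset u := (SimpleGraph.mem_neighborFinset _ _ _).mpr hadj
      rw [hs, Finset.mem_insert] at hx
      rcases hx with h | h
      · exact Or.inr ⟨hur, h⟩
      · exact Or.inl h
  have hdeg2 : ∀ u x y : V, T.Adj u x → T.Adj u y → x ≠ y → 2 ≤ T.degree u := by
    intro u x y h1 h2 hne
    rw [← SimpleGraph.card_neighborFinset_eq_degree]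
    exact Finset.one_lt_card.mpr
      ⟨x, (SimpleGraph.mem_neighborFinset _ _ _).mpr h1,
       y, (SimpleGraph.mem_neighborFinset _ _ _).mpr h2, hne⟩
  refine ⟨f, ?_, ?_⟩
  · -- proper edge coloring
    intro u v w hv hw hvw
    have hC := hall u (hdeg2 u v w hv hw hvw)
    have hval : ∀ x, T.Adj u x → f s(u,x) = if x ∈ chl T r u then g x else g u := by
      intro x hadj
      rcases hclass u x hadj with hc | ⟨hur, hpar⟩
      · rw [if_pos hc, hfeval]
        simp only [hF]
        have := ((mem_chl hT).mp hc).2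
        rw [if_pos (by omega)]
      · rw [if_neg (by rw [hpar]; exact (neighborFinset_eq_insert hT hur).2), Sym2.eq_swap,
          hpar, hf_par u hur]
    rw [hval v hv, hval w hw]
    by_cases hv' : v ∈ chl T r u <;> by_cases hw' : w ∈ chl T r u
    · rw [if_pos hv', if_pos hw']
      intro h
      exact hvw (hC.1 hv' hw' h)
    · rw [if_pos hv', if_neg hw']
      rcases hclass u w hw with h | ⟨hur, _⟩
      · exact absurd h hw'
      · exact hC.2.1 v hv' hur
    · rw [if_neg hv', if_pos hw']
      rcases hclass u v hv with h | ⟨hur, _⟩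
      · exact absurd h hv'
      · exact (hC.2.1 w hw' hur).symm
    · exfalso
      rcases hclass u v hv with h | ⟨_, h1⟩
      · exact hv' h
      rcases hclass u w hw with h | ⟨_, h2⟩
      · exact hw' h
      exact hvw (h1.trans h2.symm)
  · -- weights differ on adjacent vertices
    intro u v hadj
    rw [hweight u, hweight v]
    have main : ∀ u c : V, c ∈ chl T r u → wgt T r g u ≠ wgt T r g c := by
      intro u c hc
      have hadj' : T.Adj u c := ((mem_chl hT).mp hc).1
      have hu2 : 2 ≤ T.degree u := by
        by_cases hur : u = r
        · rw [hur]; exact hr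
        · refine hdeg2 u (par hT r u) c ((par_spec hT hur).1).symm hadj' ?_
          intro h
          have h1 := (par_spec hT hur).2
          have h2 := ((mem_chl hT).mp hc).2
          rw [h] at h1
          omega
      have hCu := hall u hu2
      have hcr := chl_par hT hc
      by_cases hc2 : 2 ≤ T.degree c
      · have hCc := hall c hc2
        have hw := hCc.2.2.2.2 hcr.1
        rw [hcr.2] at hw
        exact hw.symm
      · have hccard := card_chl hT hcr.1
        have hempty : chl T r c = ∅ := Finset.card_eq_zero.mp (by omega)
        have hwc : wgt T r g c = g c := by
          unfold wgt
          rw [if_neg hcr.1, hempty]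
          simp
        rw [hwc]
        exact hCu.2.2.2.1 c hc
    rcases adj_dist_cases hT r hadj with hd | hd
    · exact main u v ((mem_chl hT).mpr ⟨hadj, hd.symm⟩)
    · exact (main v u ((mem_chl hT).mpr ⟨hadj.symm, hd.symm⟩)).symm
end Final
section Glue1
open SimpleGraph Finset
variable {V : Type} [Fintype V] [DecidableEq V] {T : SimpleGraph V} [DecidableRel T.Adj]

lemma degree_pos_tree (hT : T.IsTree) (hn : Nontrivial V) (v : V) : 1 ≤ T.degree v := by
  obtain ⟨u, hu⟩ := exists_ne v
  obtain ⟨w⟩ := hT.isConnected v u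
  obtain ⟨x, hadj, p', _⟩ := SimpleGraph.Walk.exists_eq_cons_of_ne (Ne.symm hu) w
  rw [← SimpleGraph.card_neighborFinset_eq_degree]
  exact Finset.card_pos.mpr ⟨x, (SimpleGraph.mem_neighborFinset _ _ _).mpr hadj⟩

lemma exists_internal_vertex (hT : T.IsTree) (hcard : 3 ≤ Fintype.card V) :
    ∃ r : V, 2 ≤ T.degree r := by
  have hn : Nontrivial V := by rw [← Fintype.one_lt_card_iff_nontrivial]; omega
  obtain ⟨a, b, hab⟩ := Fintype.exists_pair_of_one_lt_card (α := V) (by omega)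
  obtain ⟨w⟩ := hT.isConnected a b
  obtain ⟨x, hax, _, _⟩ := SimpleGraph.Walk.exists_eq_cons_of_ne hab w
  -- third vertex c ∉ {a, x}
  obtain ⟨c, hc⟩ : ∃ c : V, c ∉ ({a, x} : Finset V) := by
    by_contra h'
    push_neg at h'
    have hsub : (Finset.univ : Finset V) ⊆ {a, x} := fun y _ => h' y
    have h1 := Finset.card_le_card hsub
    have h2 : ({a, x} : Finset V).card ≤ 2 := by
      apply le_trans (Finset.card_insert_le _ _); simp
    rw [Finset.card_univ] at h1
    omega
  simp only [Finset.mem_insert, Finset.mem_singleton, not_or] at hc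
  obtain ⟨hca, hcx⟩ := hc
  obtain ⟨p, hppath⟩ := (hT.existsUnique_path a c).exists
  obtain ⟨y, hay, q, hq⟩ := SimpleGraph.Walk.exists_eq_cons_of_ne (Ne.symm hca) p
  by_cases hyx : y = x
  · -- continue along q : Walk y c; y = x ≠ c
    subst hyx
    subst hq
    rw [SimpleGraph.Walk.cons_isPath_iff] at hppath
    obtain ⟨hqpath, haq⟩ := hppath
    obtain ⟨z, hyz, q', hq'⟩ := SimpleGraph.Walk.exists_eq_cons_of_ne (Ne.symm hcx) q
    have hza : z ≠ a := by
      intro h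
      apply haq
      subst hq'
      rw [SimpleGraph.Walk.support_cons]
      right
      rw [← h]
      exact SimpleGraph.Walk.start_mem_support q'
    refine ⟨y, ?_⟩
    rw [← SimpleGraph.card_neighborFinset_eq_degree]
    apply Finset.one_lt_card.mpr
    exact ⟨a, (SimpleGraph.mem_neighborFinset _ _ _).mpr hay.symm,
      z, (SimpleGraph.mem_neighborFinset _ _ _).mpr hyz, Ne.symm hza⟩
  · refine ⟨a, ?_⟩
    rw [← SimpleGraph.card_neighborFinset_eq_degree]
    apply Finset.one_lt_card.mpr
    exact ⟨x, (SimpleGraph.mem_neighborFinset _ _ _).mpr hax,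
      y, (SimpleGraph.mem_neighborFinset _ _ _).mpr hay, fun h => hyx (h.symm)⟩
end Glue1
section Glue2
open Finset
variable {A : Type} [AddCommGroup A] [Fintype A] [DecidableEq A]

lemma exists_three_torsion (h3 : ¬ ∃ m : ℕ, Fintype.card A = 3 ^ m) :
    ∃ x : A, x + x + x ≠ 0 := by
  by_contra hco
  push_neg at hco
  apply h3
  have hpos : (Fintype.card A) ≠ 0 := Fintype.card_ne_zero
  refine ⟨(Fintype.card A).primeFactorsList.length,
    Nat.eq_prime_pow_of_unique_prime_dvd hpos ?_⟩
  intro d hd hdvd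
  haveI : Fact d.Prime := ⟨hd⟩
  obtain ⟨x, hx⟩ := exists_prime_addOrderOf_dvd_card d hdvd
  have h3x : (3 : ℕ) • x = 0 := by
    rw [show (3:ℕ) = 2 + 1 from rfl, add_nsmul, two_nsmul, one_nsmul]
    exact hco x
  have hdd : addOrderOf x ∣ 3 := addOrderOf_dvd_of_nsmul_eq_zero h3x
  rw [hx] at hdd
  exact (Nat.prime_dvd_prime_iff_eq hd Nat.prime_three).mp hdd

lemma double_sols_le (h8 : ¬ ((8:ℕ) ∣ Fintype.card A)) (c : A) :
    (Finset.univ.filter (fun y : A => y + y = c)).card ≤ 4 := by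
  set K : AddSubgroup A :=
    { carrier := {y : A | y + y = 0}
      zero_mem' := by simp
      add_mem' := by
        intro a b ha hb
        simp only [Set.mem_setOf_eq] at *
        calc (a+b)+(a+b) = (a+a)+(b+b) := by abel
          _ = 0 := by rw [ha, hb, add_zero]
      neg_mem' := by
        intro a ha
        simp only [Set.mem_setOf_eq] at *
        calc (-a) + (-a) = -((a+a)) := by abel
          _ = 0 := by rw [ha, neg_zero] } with hK
  haveI : Fintype ↥K := Fintype.ofFinite ↥K
  have hcardK : Nat.card K ∣ Nat.card A := AddSubgroup.card_addSubgroup_dvd_card K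
  have hKpos : Nat.card K ≠ 0 := Nat.card_pos.ne'
  have hK2 : ∀ {d : ℕ}, d.Prime → d ∣ Nat.card K → d = 2 := by
    intro d hd hdvd
    haveI : Fact d.Prime := ⟨hd⟩
    obtain ⟨x, hx⟩ := exists_prime_addOrderOf_dvd_card (G := K) d
      (by rwa [← Nat.card_eq_fintype_card])
    have h2x : (2 : ℕ) • x = 0 := by
      apply Subtype.ext
      rw [two_nsmul]
      exact x.2
    have hdd : addOrderOf x ∣ 2 := addOrderOf_dvd_of_nsmul_eq_zero h2x
    rw [hx] at hdd
    exact (Nat.prime_dvd_prime_iff_eq hd Nat.prime_two).mp hdd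
  have hKpow : Nat.card K = 2 ^ (Nat.card K).primeFactorsList.length :=
    Nat.eq_prime_pow_of_unique_prime_dvd hKpos hK2
  have hKle : Nat.card K ≤ 4 := by
    rcases le_or_gt (Nat.card K).primeFactorsList.length 2 with hs | hs
    · calc Nat.card K = 2 ^ (Nat.card K).primeFactorsList.length := hKpow
        _ ≤ 2 ^ 2 := Nat.pow_le_pow_right (by norm_num) hs
        _ = 4 := by norm_num
    · exfalso
      apply h8
      have h8K : (8:ℕ) ∣ Nat.card K := by
        rw [hKpow]
        have hdd : (2:ℕ)^3 ∣ 2 ^ (Nat.card K).primeFactorsList.length :=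
          pow_dvd_pow 2 (by omega)
        simpa using hdd
      rw [← Nat.card_eq_fintype_card]
      exact h8K.trans hcardK
  have hKfil : Nat.card ↥K = (Finset.univ.filter (fun y : A => y + y = 0)).card := by
    rw [Nat.card_eq_fintype_card (α := ↥K), ← Fintype.card_subtype]
    apply Fintype.card_congr
    apply Equiv.subtypeEquivRight
    intro y
    constructor
    · intro hy
      have : y ∈ ({z : A | z + z = 0} : Set A) := hy
      exact this
    · intro hy
      exact hy
  rcases Finset.eq_empty_or_nonempty (Finset.univ.filter (fun y : A => y + y = c)) with he | hne
  · rw [he]; simp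
  · obtain ⟨y₀, hy₀⟩ := hne
    have hy0 : y₀ + y₀ = c := (Finset.mem_filter.mp hy₀).2
    have hle : (Finset.univ.filter (fun y : A => y + y = c)).card ≤
        (Finset.univ.filter (fun y : A => y + y = 0)).card := by
      apply Finset.card_le_card_of_injOn (fun y => y - y₀)
      · intro y hy
        simp only [Finset.coe_filter, Finset.mem_coe, Set.mem_setOf_eq, Finset.mem_filter, Finset.mem_univ, true_and] at hy ⊢
        calc (y - y₀) + (y - y₀) = (y+y) - (y₀+y₀) := by abel
          _ = 0 := by rw [hy, hy0, sub_self]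
      · intro y1 _ y2 _ h
        have h2 := congrArg (fun z => z + y₀) h
        simpa [sub_add_cancel] using h2
    omega
end Glue2

lemma eight_not_dvd (q : ℕ) : ¬ ((8:ℕ) ∣ 3 ^ q + 1) := by
  have h : 3 ^ q % 8 = 1 ∨ 3 ^ q % 8 = 3 := by
    induction q with
    | zero => left; rfl
    | succ n ih =>
      rcases ih with h | h
      · right; rw [pow_succ, Nat.mul_mod, h]
      · left; rw [pow_succ, Nat.mul_mod, h]
  intro hdvd
  omega


/-- If `T` is a tree of order at least `3`, then `χ'_g(T) ≤ Δ(T) + 2` if `Δ(T)` is odd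
and `T` is not `(3^p - 2)`-regular for some integer `p ≥ 2`, and `χ'_g(T) ≤ Δ(T) + 3`
otherwise. -/
theorem tree_groupTwinChromaticIndex_le {V : Type} [Fintype V] (T : SimpleGraph V)
    [DecidableRel T.Adj] (hT : T.IsTree) (hcard : 3 ≤ Fintype.card V) :
    ((Odd T.maxDegree ∧ ¬ ∃ p : ℕ, 2 ≤ p ∧ IsRegularTreeDeg T (3 ^ p - 2)) →
      ∃ k ∈ TwinSet T, k ≤ T.maxDegree + 2) ∧
    (∃ k ∈ TwinSet T, k ≤ T.maxDegree + 3) := by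

  haveI : DecidableEq V := Classical.decEq V
  obtain ⟨r0, hr0⟩ := exists_internal_vertex hT hcard
  have hn : Nontrivial V := by rw [← Fintype.one_lt_card_iff_nontrivial]; omega
  haveI : Nonempty V := ⟨r0⟩
  have hΔ2 : 2 ≤ T.maxDegree := le_trans hr0 (T.degree_le_maxDegree r0)
  obtain ⟨rm, hrm⟩ := T.exists_maximal_degree_vertex
  have hdm : T.degree rm = T.maxDegree := hrm.symm
  have hparta : (Odd T.maxDegree ∧ ¬ ∃ p : ℕ, 2 ≤ p ∧ IsRegularTreeDeg T (3 ^ p - 2)) →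
      (T.maxDegree + 2) ∈ TwinSet T := by
    rintro ⟨hodd, hreg⟩
    have hΔ3 : 3 ≤ T.maxDegree := by obtain ⟨m, hm⟩ := hodd; omega
    refine ⟨by omega, fun A _ _ hcA => ?_⟩
    haveI : DecidableEq A := Classical.decEq A
    have hAodd : Odd (Fintype.card A) := by
      rw [hcA]; obtain ⟨m, hm⟩ := hodd; exact ⟨m+1, by omega⟩
    have h5 : 5 ≤ Fintype.card A := by rw [hcA]; omega
    by_cases hregΔ : IsRegularTreeDeg T T.maxDegree
    · have h3 : ¬ ∃ m : ℕ, Fintype.card A = 3 ^ m := by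
        rintro ⟨m, hm⟩
        rw [hcA] at hm
        have hm2 : 2 ≤ m := by
          by_contra hc'
          push_neg at hc'
          interval_cases m <;> omega
        refine hreg ⟨m, hm2, ?_⟩
        have h32 : (3:ℕ)^m - 2 = T.maxDegree := by omega
        rw [h32]
        exact hregΔ
      refine exists_twin_coloring hT (fun _ : A => True) rm (by omega) ?_ ?_
      · obtain ⟨S, hc, hs⟩ := oracle_reg_root hAodd (exists_three_torsion h3)
        exact ⟨S, by rw [hc, hcA, hdm]; omega, fun _ _ => trivial, hs⟩
      · intro v hv h2v a W _ hW
        obtain ⟨S, hc, h1, h2, h3'⟩ := oracle_reg_step hAodd h5 hW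
        refine ⟨S, ?_, fun _ _ => trivial, h1, h2, h3'⟩
        have hdv : T.degree v = T.maxDegree := hregΔ v (by omega)
        rw [hc, hcA, hdv]
        omega
    · obtain ⟨r1, hr1a, hr1b⟩ : ∃ v : V, T.degree v ≠ 1 ∧ T.degree v ≠ T.maxDegree := by
        by_contra hc'
        push_neg at hc'
        exact hregΔ (fun v hv => hc' v hv)
      have hd1 : 1 ≤ T.degree r1 := degree_pos_tree hT hn r1
      have hdle : T.degree r1 ≤ T.maxDegree := T.degree_le_maxDegree r1
      refine exists_twin_coloring hT (fun x : A => x ≠ 0) r1 (by omega) ?_ ?_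
      · obtain ⟨S, hc, h1, h2'⟩ := oracle_odd_root hAodd h5 (t := T.degree r1) (by omega)
          (by rw [hcA]; omega)
        exact ⟨S, hc, h1, h2'⟩
      · intro v hv h2v a W ha hW
        have hdv : T.degree v ≤ T.maxDegree := T.degree_le_maxDegree v
        obtain ⟨S, hc, h1, h2, h3', h4⟩ := oracle_odd_step hAodd h5 ha hW
          (t := T.degree v - 1) (by omega) (by rw [hcA]; omega)
        exact ⟨S, hc, h1, h2, h3', h4⟩
  constructor
  · intro h
    exact ⟨T.maxDegree + 2, hparta h, le_refl _⟩
  · by_cases hb : Odd T.maxDegree ∧ ¬ ∃ p : ℕ, 2 ≤ p ∧ IsRegularTreeDeg T (3 ^ p - 2)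
    · exact ⟨T.maxDegree + 2, hparta hb, by omega⟩
    · rw [not_and_or, not_not] at hb
      rcases hb with hnodd | hq
      · have heven : Even T.maxDegree := Nat.not_odd_iff_even.mp hnodd
        refine ⟨T.maxDegree + 3, ⟨by omega, fun A _ _ hcA => ?_⟩, le_refl _⟩
        haveI : DecidableEq A := Classical.decEq A
        have hAodd : Odd (Fintype.card A) := by
          rw [hcA]; obtain ⟨m, hm⟩ := heven; exact ⟨m+1, by omega⟩
        have h5 : 5 ≤ Fintype.card A := by rw [hcA]; omega
        refine exists_twin_coloring hT (fun x : A => x ≠ 0) r0 hr0 ?_ ?_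
        · obtain ⟨S, hc, h1, h2'⟩ := oracle_odd_root hAodd h5 (t := T.degree r0) hr0
            (by rw [hcA]; have := T.degree_le_maxDegree r0; omega)
          exact ⟨S, hc, h1, h2'⟩
        · intro v hv h2v a W ha hW
          have hdv : T.degree v ≤ T.maxDegree := T.degree_le_maxDegree v
          obtain ⟨S, hc, h1, h2, h3', h4⟩ := oracle_odd_step hAodd h5 ha hW
            (t := T.degree v - 1) (by omega) (by rw [hcA]; omega)
          exact ⟨S, hc, h1, h2, h3', h4⟩
      · obtain ⟨q, hq2, hqreg⟩ := hq
        have h9 : 9 ≤ 3 ^ q := by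
          calc (9:ℕ) = 3^2 := by norm_num
            _ ≤ 3^q := Nat.pow_le_pow_right (by norm_num) hq2
        have hΔq : T.maxDegree = 3 ^ q - 2 := by
          rw [← hdm]
          exact hqreg rm (by omega)
        refine ⟨T.maxDegree + 3, ⟨by omega, fun A _ _ hcA => ?_⟩, le_refl _⟩
        haveI : DecidableEq A := Classical.decEq A
        have hkval : Fintype.card A = 3 ^ q + 1 := by rw [hcA, hΔq]; omega
        have h10 : 10 ≤ Fintype.card A := by omega
        have h8 : ¬ ((8:ℕ) ∣ Fintype.card A) := by rw [hkval]; exact eight_not_dvd q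
        have H2 := fun c => double_sols_le h8 c
        refine exists_twin_coloring hT (fun _ : A => True) rm (by omega) ?_ ?_
        · obtain ⟨S, hc, hs⟩ := oracle_ereg_root h10 H2
          exact ⟨S, by rw [hc, hcA, hdm]; omega, fun _ _ => trivial, hs⟩
        · intro v hv h2v a W _ hW
          obtain ⟨S, hc, h1, h2, h3'⟩ := oracle_ereg_step h10 H2 hW
          refine ⟨S, ?_, fun _ _ => trivial, h1, h2, h3'⟩
          have hdv : T.degree v = T.maxDegree := by rw [hΔq]; exact hqreg v (by omega)
          rw [hc, hcA, hdv]
          omega
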